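/- (Venter-type theorem) Let (x_n) be a nonnegative real sequence with x_{n+1} ≤ (1 − α_n)x_n + ω_n for all n ≥ 0, where α_n ∈ (0,1], ω_n ≥ 0, Σ_{n} ω_n < ∞, Σ_n α_n = ∞. Then x_n → 0. -/
import Mathlib


open Filter Topology

theorem stmt6 (x α ω : ℕ → ℝ)
    (hx : ∀ n, 0 ≤ x n)
    (hα : ∀ n, α n ∈ Set.Ioc (0 : ℝ) 1)
    (hω : ∀ n, 0 ≤ ω n)
    (hωsum : Summable ω)
    (hαsum : ¬ Summable α)
    (hrec : ∀ n, x (n + 1) ≤ (1 - α n) * x n + ω n) :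
    Tendsto x atTop (𝓝 0) := by
  rw [Metric.tendsto_atTop]
  intro ε hε
  -- choose N with tail sum of ω small
  have htail := tendsto_sum_nat_add ω
  have h2 : (0:ℝ) < ε / 2 := by linarith
  obtain ⟨N, hN⟩ := (htail.eventually (gt_mem_nhds h2)).exists
  -- key induction bound
  have key : ∀ m, x (N + m) ≤ (∏ k ∈ Finset.range m, (1 - α (N + k))) * x N
      + ∑ k ∈ Finset.range m, ω (N + k) := by
    intro m
    induction m with
    | zero => simp
    | succ m ih =>
      have hrec' := hrec (N + m)
      have h1 : 0 ≤ 1 - α (N + m) := by have := (hα (N + m)).2; linarith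
      have := mul_le_mul_of_nonneg_left ih h1
      rw [Finset.prod_range_succ, Finset.sum_range_succ]
      have : x (N + (m + 1)) ≤ (1 - α (N + m)) *
          ((∏ k ∈ Finset.range m, (1 - α (N + k))) * x N
            + ∑ k ∈ Finset.range m, ω (N + k)) + ω (N + m) := by
        calc x (N + (m + 1)) = x ((N + m) + 1) := by ring_nf
        _ ≤ (1 - α (N + m)) * x (N + m) + ω (N + m) := hrec (N + m)
        _ ≤ _ := by nlinarith [this]
      calc x (N + (m + 1)) ≤ _ := this
        _ ≤ _ := by
          have hS : 0 ≤ ∑ k ∈ Finset.range m, ω (N + k) :=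
            Finset.sum_nonneg fun k _ => hω _
          nlinarith [hα (N + m) |>.1]
  -- finite ω sums bounded by tail tsum
  have hωbound : ∀ m, ∑ k ∈ Finset.range m, ω (N + k) ≤ ∑' k, ω (k + N) := by
    intro m
    have hs : Summable fun k => ω (k + N) := (summable_nat_add_iff N).2 hωsum
    have := Summable.sum_le_tsum (Finset.range m) (fun k _ => hω (k + N)) hs
    calc ∑ k ∈ Finset.range m, ω (N + k) = ∑ k ∈ Finset.range m, ω (k + N) := by
          apply Finset.sum_congr rfl; intro k _; rw [Nat.add_comm]
      _ ≤ _ := this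
  -- product bound via exp
  have hprod : ∀ m, (∏ k ∈ Finset.range m, (1 - α (N + k)))
      ≤ Real.exp (-(∑ k ∈ Finset.range m, α (N + k))) := by
    intro m
    have : Real.exp (-(∑ k ∈ Finset.range m, α (N + k)))
        = ∏ k ∈ Finset.range m, Real.exp (-(α (N + k))) := by
      rw [← Real.exp_sum, ← Finset.sum_neg_distrib]
    rw [this]
    apply Finset.prod_le_prod
    · intro k _; have := (hα (N + k)).2; linarith
    · intro k _
      have := Real.add_one_le_exp (-(α (N + k)))
      linarith
  -- divergence of shifted α sums
  have hαs : ¬ Summable fun k => α (N + k) := by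
    intro h
    exact hαsum ((summable_nat_add_iff N).1 (h.congr fun k => by rw [Nat.add_comm]))
  have hαdiv : Tendsto (fun m => ∑ k ∈ Finset.range m, α (N + k)) atTop atTop := by
    rcases (not_summable_iff_tendsto_nat_atTop_of_nonneg
      (fun k => (hα (N + k)).1.le)).1 hαs with h
    exact h
  have hexp : Tendsto (fun m => Real.exp (-(∑ k ∈ Finset.range m, α (N + k))) * x N)
      atTop (𝓝 0) := by
    have h1 : Tendsto (fun m => Real.exp (-(∑ k ∈ Finset.range m, α (N + k))))
        atTop (𝓝 0) := Real.tendsto_exp_atBot.comp (tendsto_neg_atTop_atBot.comp hαdiv)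
    simpa using h1.mul_const (x N)
  obtain ⟨M, hM⟩ := (Metric.tendsto_atTop.1 hexp (ε / 2) h2)
  refine ⟨N + M, fun n hn => ?_⟩
  obtain ⟨m, rfl⟩ := Nat.exists_eq_add_of_le (le_of_add_le_left hn : N ≤ n)
  have hmM : M ≤ m := by omega
  have hxle : x (N + m) ≤ Real.exp (-(∑ k ∈ Finset.range m, α (N + k))) * x N + ε / 2 := by
    calc x (N + m) ≤ _ := key m
      _ ≤ Real.exp (-(∑ k ∈ Finset.range m, α (N + k))) * x N + ε / 2 := by
        have h3 := mul_le_mul_of_nonneg_right (hprod m) (hx N)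
        have h4 := (hωbound m).trans_lt hN
        linarith
  have hM' := hM m hmM
  rw [Real.dist_eq, sub_zero] at hM' ⊢
  have hE : 0 ≤ Real.exp (-(∑ k ∈ Finset.range m, α (N + k))) * x N :=
    mul_nonneg (Real.exp_pos _).le (hx N)
  rw [abs_of_nonneg hE] at hM'
  rw [abs_of_nonneg (hx _)]
  linarith
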